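/- Let ε ∈ ℝ^I be a standard Gaussian vector over a finite index set I and B_1,…,B_s a partition of I. Then the random variable sup{⟨ε, θ⟩ : θ ∈ Θ, ‖θ‖₂ ≤ t}, where Θ consists of vectors constant on each block, is stochastically dominated by t·Y_s where Y_s² follows a chi-squared distribution with s degrees of freedom. -/

import Mathlib

open MeasureTheory ProbabilityTheory Real
open scoped RealInnerProductSpace ENNReal NNReal

namespace GaussAux



lemma pdf_mul_pdf (a b : ℝ≥0) (ha : a ≠ 0) (hb : b ≠ 0) (z x : ℝ) :
    gaussianPDFReal 0 a x * gaussianPDFReal x b z =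
      gaussianPDFReal 0 (a + b) z * gaussianPDFReal ((a : ℝ) * z / ((a : ℝ) + b)) (a * b / (a + b)) x := by
  have ha' : (0:ℝ) < a := lt_of_le_of_ne a.coe_nonneg (by exact_mod_cast (Ne.symm ha))
  have hb' : (0:ℝ) < b := lt_of_le_of_ne b.coe_nonneg (by exact_mod_cast (Ne.symm hb))
  have hab : (0:ℝ) < (a:ℝ) + b := by positivity
  have hc : ((a * b / (a + b) : ℝ≥0) : ℝ) = (a:ℝ) * b / ((a:ℝ) + b) := by
    push_cast [NNReal.coe_div]
    ring
  simp only [gaussianPDFReal, hc]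
  rw [NNReal.coe_add]
  have hconst : (√(2 * π * a))⁻¹ * (√(2 * π * b))⁻¹
      = (√(2 * π * ((a:ℝ) + b)))⁻¹ * (√(2 * π * ((a:ℝ) * b / ((a:ℝ) + b))))⁻¹ := by
    rw [← mul_inv, ← mul_inv, ← Real.sqrt_mul (by positivity), ← Real.sqrt_mul (by positivity)]
    congr 1
    field_simp
  have hexp : rexp (-(x - 0) ^ 2 / (2 * a)) * rexp (-(z - x) ^ 2 / (2 * b))
      = rexp (-(z - 0) ^ 2 / (2 * ((a:ℝ) + b)))
        * rexp (-(x - (a:ℝ) * z / ((a:ℝ) + b)) ^ 2 / (2 * ((a:ℝ) * b / ((a:ℝ) + b)))) := by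
    rw [← Real.exp_add, ← Real.exp_add]
    congr 1
    field_simp
    ring
  calc (√(2 * π * a))⁻¹ * rexp (-(x - 0) ^ 2 / (2 * a)) * ((√(2 * π * b))⁻¹ * rexp (-(z - x) ^ 2 / (2 * b)))
      = ((√(2 * π * a))⁻¹ * (√(2 * π * b))⁻¹) * (rexp (-(x - 0) ^ 2 / (2 * a)) * rexp (-(z - x) ^ 2 / (2 * b))) := by ring
    _ = _ := by rw [hconst, hexp]; ring





lemma lintegral_pdf_conv (a b : ℝ≥0) (ha : a ≠ 0) (hb : b ≠ 0) (z : ℝ) :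
    ∫⁻ x, gaussianPDF 0 a x * gaussianPDF x b z = gaussianPDF 0 (a + b) z := by
  have hc : (a * b / (a + b) : ℝ≥0) ≠ 0 := by
    simp [div_eq_zero_iff, ha, hb]
  have h1 : ∀ x : ℝ, gaussianPDF 0 a x * gaussianPDF x b z
      = ENNReal.ofReal (gaussianPDFReal 0 (a+b) z
          * gaussianPDFReal ((a : ℝ) * z / ((a : ℝ) + b)) (a * b / (a + b)) x) := by
    intro x
    rw [gaussianPDF, gaussianPDF, ← ENNReal.ofReal_mul (gaussianPDFReal_nonneg _ _ _),
      pdf_mul_pdf a b ha hb z x]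
  rw [lintegral_congr h1,
    ← ofReal_integral_eq_lintegral_ofReal
    ((integrable_gaussianPDFReal _ _).const_mul _)
    (ae_of_all _ fun x => mul_nonneg (gaussianPDFReal_nonneg _ _ _) (gaussianPDFReal_nonneg _ _ _))]
  rw [integral_const_mul, integral_gaussianPDFReal_eq_one _ hc, mul_one, gaussianPDF]

lemma measurable_pdf2 (b : ℝ≥0) : Measurable (fun p : ℝ × ℝ => gaussianPDF p.1 b p.2) := by
  have : Measurable (fun p : ℝ × ℝ => gaussianPDFReal p.1 b p.2) :=
    ((((measurable_snd.sub measurable_fst).pow_const 2).neg.div_const _).exp).const_mul _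
  exact this.ennreal_ofReal

lemma gaussian_conv (a b : ℝ≥0) :
    ((gaussianReal 0 a).prod (gaussianReal 0 b)).map (fun p : ℝ × ℝ => p.1 + p.2)
      = gaussianReal 0 (a + b) := by
  rcases eq_or_ne a 0 with rfl | ha
  · rw [gaussianReal_zero_var, zero_add]
    rw [Measure.dirac_prod, Measure.map_map (by fun_prop) (by fun_prop)]
    have : ((fun p : ℝ × ℝ => p.1 + p.2) ∘ Prod.mk (0:ℝ)) = fun y : ℝ => y := by
      funext y; simp [Function.comp]
    rw [this, Measure.map_id']
  rcases eq_or_ne b 0 with rfl | hb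
  · rw [gaussianReal_zero_var, add_zero]
    rw [Measure.prod_dirac, Measure.map_map (by fun_prop) (by fun_prop)]
    have : ((fun p : ℝ × ℝ => p.1 + p.2) ∘ (fun x : ℝ => (x, (0:ℝ)))) = fun y : ℝ => y := by
      funext y; simp [Function.comp]
    rw [this, Measure.map_id']
  have hab : a + b ≠ 0 := by simp [ha]
  ext E hE
  rw [Measure.map_apply (by fun_prop) hE,
    Measure.prod_apply (hE.preimage (by fun_prop))]
  have hinner : ∀ x : ℝ, gaussianReal 0 b (Prod.mk x ⁻¹' ((fun p : ℝ × ℝ => p.1 + p.2) ⁻¹' E))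
      = ∫⁻ z in E, gaussianPDF x b z := by
    intro x
    have h0 : Prod.mk x ⁻¹' ((fun p : ℝ × ℝ => p.1 + p.2) ⁻¹' E) = (fun y => x + y) ⁻¹' E := rfl
    rw [h0, ← Measure.map_apply (by fun_prop) hE, gaussianReal_map_const_add, zero_add,
      gaussianReal_of_var_ne_zero _ hb, withDensity_apply _ hE]
  rw [lintegral_congr hinner]
  have hm2 : Measurable fun x => ∫⁻ z in E, gaussianPDF x b z :=
    Measurable.lintegral_prod_right (f := fun x z => gaussianPDF x b z) (measurable_pdf2 b)
  rw [gaussianReal_of_var_ne_zero _ ha,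
    lintegral_withDensity_eq_lintegral_mul _ (measurable_gaussianPDF _ _) hm2]
  have hswap : ∫⁻ x, gaussianPDF 0 a x * ∫⁻ z in E, gaussianPDF x b z
      = ∫⁻ z in E, ∫⁻ x, gaussianPDF 0 a x * gaussianPDF x b z := by
    have h3 : ∀ x : ℝ, gaussianPDF 0 a x * ∫⁻ z in E, gaussianPDF x b z
        = ∫⁻ z in E, gaussianPDF 0 a x * gaussianPDF x b z := fun x =>
      (lintegral_const_mul _ (measurable_pdf2 b |>.comp (measurable_prodMk_left))).symm
    rw [lintegral_congr h3, lintegral_lintegral_swap]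
    exact ((measurable_gaussianPDF 0 a |>.comp measurable_fst).mul
      (measurable_pdf2 b)).aemeasurable
  simp only [Pi.mul_apply]
  rw [hswap, lintegral_congr (fun z => lintegral_pdf_conv a b ha hb z) (μ := volume.restrict E),
    gaussianReal_of_var_ne_zero _ hab, withDensity_apply _ hE]





variable {Ω : Type*} [MeasurableSpace Ω] {μ : Measure Ω} [IsProbabilityMeasure μ]

lemma indepFun_map_add {X Y : Ω → ℝ} (h : IndepFun X Y μ) (hX : Measurable X)
    (hY : Measurable Y) {a b : ℝ≥0} (hlX : μ.map X = gaussianReal 0 a)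
    (hlY : μ.map Y = gaussianReal 0 b) :
    μ.map (fun ω => X ω + Y ω) = gaussianReal 0 (a + b) := by
  have hmap : μ.map (fun ω => (X ω, Y ω)) = (μ.map X).prod (μ.map Y) :=
    (indepFun_iff_map_prod_eq_prod_map_map hX.aemeasurable hY.aemeasurable).1 h
  have : (fun ω => X ω + Y ω) = (fun p : ℝ × ℝ => p.1 + p.2) ∘ (fun ω => (X ω, Y ω)) := rfl
  rw [this, ← Measure.map_map (by fun_prop) (hX.prodMk hY), hmap, hlX, hlY, gaussian_conv]

lemma map_sum_gaussian {I : Type*} {f : I → Ω → ℝ}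
    (hmeas : ∀ i, Measurable (f i))
    (hindep : iIndepFun f μ)
    (hgauss : ∀ i, μ.map (f i) = gaussianReal 0 1) (S : Finset I) :
    μ.map (fun ω => ∑ i ∈ S, f i ω) = gaussianReal 0 (S.card : ℝ≥0) := by
  classical
  induction S using Finset.induction_on with
  | empty =>
      simp only [Finset.sum_empty, Finset.card_empty, Nat.cast_zero, gaussianReal_zero_var]
      rw [Measure.map_const, measure_univ, one_smul]
  | @insert a S ha ih =>
      have hind : IndepFun (∑ j ∈ S, f j) (f a) μ :=
        hindep.indepFun_finsetSum_of_notMem hmeas ha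
      have hfun : (∑ j ∈ S, f j) = fun ω => ∑ j ∈ S, f j ω := by
        funext ω; simp
      have hmS : Measurable (∑ j ∈ S, f j) := by
        rw [hfun]; exact S.measurable_sum fun i _ => hmeas i
      have h := indepFun_map_add hind.symm (hmeas a) hmS (hgauss a)
        (by rw [← ih]; congr 1)
      have h2 : (fun ω => ∑ i ∈ insert a S, f i ω)
          = fun ω => f a ω + (∑ j ∈ S, f j) ω := by
        funext ω; rw [Finset.sum_insert ha, hfun]
      rw [h2, h]
      congr 1
      rw [Finset.card_insert_of_notMem ha]
      push_cast
      ring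

lemma map_normalized_sum_gaussian {I : Type*} {f : I → Ω → ℝ}
    (hmeas : ∀ i, Measurable (f i))
    (hindep : iIndepFun f μ)
    (hgauss : ∀ i, μ.map (f i) = gaussianReal 0 1) (S : Finset I) (hS : S.Nonempty) :
    μ.map (fun ω => (∑ i ∈ S, f i ω) / Real.sqrt S.card) = gaussianReal 0 1 := by
  have hc : (0:ℝ) < S.card := by exact_mod_cast hS.card_pos
  have h1 : (fun ω => (∑ i ∈ S, f i ω) / Real.sqrt S.card)
      = (fun x : ℝ => (Real.sqrt S.card)⁻¹ * x) ∘ (fun ω => ∑ i ∈ S, f i ω) := by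
    ext ω; simp [div_eq_inv_mul, Function.comp]
  rw [h1, ← Measure.map_map (by fun_prop) (S.measurable_sum (fun i _ => hmeas i)),
    map_sum_gaussian hmeas hindep hgauss S, gaussianReal_map_const_mul]
  norm_num
  congr 1
  ext
  push_cast
  exact inv_mul_cancel₀ hc.ne'




variable {Ω : Type*} [MeasurableSpace Ω] {μ : Measure Ω} [IsProbabilityMeasure μ]

/-- Product formula for events measurable w.r.t. disjoint blocks of independent rvs. -/
lemma meas_biInter_blocks {I κ : Type*} {f : I → Ω → ℝ}
    (hmeas : ∀ i, Measurable (f i))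
    (hindep : iIndepFun f μ)
    (B : κ → Finset I) (hdisj : ∀ ℓ ℓ', ℓ ≠ ℓ' → Disjoint (B ℓ) (B ℓ'))
    (E : κ → Set Ω)
    (hE : ∀ ℓ, MeasurableSet[⨆ i ∈ (B ℓ : Set I), MeasurableSpace.comap (f i) (inferInstance : MeasurableSpace ℝ)] (E ℓ))
    (S : Finset κ) :
    μ (⋂ ℓ ∈ S, E ℓ) = ∏ ℓ ∈ S, μ (E ℓ) := by
  classical
  set m : I → MeasurableSpace Ω := fun i => MeasurableSpace.comap (f i) inferInstance with hm
  have h_le : ∀ i, m i ≤ ‹MeasurableSpace Ω› := fun i => (hmeas i).comap_le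
  have h_iIndep : iIndep m μ := hindep.iIndep
  induction S using Finset.induction_on with
  | empty => simp
  | @insert a S ha ih =>
      rw [Finset.set_biInter_insert, Finset.prod_insert ha]
      have hdis : Disjoint (↑(B a) : Set I) (⋃ ℓ ∈ (S : Set κ), (B ℓ : Set I)) := by
        rw [Set.disjoint_iUnion_right]
        intro ℓ
        rw [Set.disjoint_iUnion_right]
        intro hℓ
        have : a ≠ ℓ := by rintro rfl; exact ha hℓ
        exact_mod_cast Finset.disjoint_coe.2 (hdisj a ℓ this)
      have hInd := indep_iSup_of_disjoint h_le h_iIndep hdis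
      have hE2 : MeasurableSet[⨆ i ∈ (⋃ ℓ ∈ (S : Set κ), (B ℓ : Set I)), m i] (⋂ ℓ ∈ S, E ℓ) := by
        refine MeasurableSet.biInter S.countable_toSet (fun ℓ hℓ => ?_)
        have hle2 : (⨆ i ∈ (B ℓ : Set I), m i) ≤ ⨆ i ∈ (⋃ ℓ ∈ (S : Set κ), (B ℓ : Set I)), m i := by
          refine iSup₂_le fun i hi => ?_
          exact le_iSup₂ (f := fun i (_ : i ∈ ⋃ ℓ ∈ (S : Set κ), (B ℓ : Set I)) => m i) i
            (Set.mem_biUnion hℓ hi)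
        exact hle2 _ (hE ℓ)
      rw [(Indep_iff _ _ _).1 hInd _ _ (hE a) hE2, ih]

/-- If a finite family has the product property and standard gaussian marginals,
its joint law is the product of gaussians. -/
lemma joint_law {κ : Type*} [Fintype κ] {g : κ → Ω → ℝ}
    (hmeas : ∀ ℓ, Measurable (g ℓ))
    (hprod : ∀ A : κ → Set ℝ, (∀ ℓ, MeasurableSet (A ℓ)) →
      μ (⋂ ℓ, g ℓ ⁻¹' A ℓ) = ∏ ℓ, μ (g ℓ ⁻¹' A ℓ))
    (hlaw : ∀ ℓ, μ.map (g ℓ) = gaussianReal 0 1) :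
    μ.map (fun ω ℓ => g ℓ ω) = Measure.pi (fun _ => gaussianReal 0 1) := by
  refine (Measure.pi_eq (μ := fun _ : κ => gaussianReal 0 1) fun A hA => ?_).symm
  have hF : Measurable (fun ω ℓ => g ℓ ω) := measurable_pi_lambda _ hmeas
  rw [Measure.map_apply hF (MeasurableSet.univ_pi hA)]
  have : (fun ω ℓ => g ℓ ω) ⁻¹' (Set.univ.pi A) = ⋂ ℓ, g ℓ ⁻¹' A ℓ := by
    ext ω; simp [Set.mem_pi]
  rw [this, hprod A hA]
  refine Finset.prod_congr rfl fun ℓ _ => ?_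
  rw [← Measure.map_apply (hmeas ℓ) (hA ℓ), hlaw ℓ]




lemma sum_sq_blocks {I : Type*} [Fintype I] {s : ℕ} (B : Fin s → Finset I)
    (hdisj : ∀ ℓ ℓ' : Fin s, ℓ ≠ ℓ' → Disjoint (B ℓ) (B ℓ'))
    (hcover : ∀ i : I, ∃ ℓ, i ∈ B ℓ) (g : I → ℝ) :
    ∑ i : I, g i = ∑ ℓ : Fin s, ∑ i ∈ B ℓ, g i := by
  classical
  have hU : (Finset.univ : Finset I) = Finset.univ.biUnion B := by
    ext i
    simp only [Finset.mem_univ, Finset.mem_biUnion, true_iff]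
    exact ⟨(hcover i).choose, by simp [(hcover i).choose_spec]⟩
  rw [show ∑ i : I, g i = ∑ i ∈ Finset.univ.biUnion B, g i from by rw [← hU]]
  exact Finset.sum_biUnion (fun ℓ _ ℓ' _ h => hdisj ℓ ℓ' h)

lemma sup_bound {I : Type*} [Fintype I] {s : ℕ} (B : Fin s → Finset I)
    (hdisj : ∀ ℓ ℓ' : Fin s, ℓ ≠ ℓ' → Disjoint (B ℓ) (B ℓ'))
    (hcover : ∀ i : I, ∃ ℓ, i ∈ B ℓ)
    (Θ : Set (EuclideanSpace ℝ I))
    (hconst : ∀ θ ∈ Θ, ∀ ℓ : Fin s, ∀ i ∈ B ℓ, ∀ j ∈ B ℓ, θ i = θ j)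
    (t : ℝ) (ht : 0 ≤ t) (x : EuclideanSpace ℝ I) :
    (⨆ θ ∈ {θ ∈ Θ | ‖θ‖ ≤ t}, ⟪x, θ⟫) ≤
      t * Real.sqrt (∑ ℓ : Fin s, ((∑ i ∈ B ℓ, x i) / Real.sqrt (B ℓ).card) ^ 2) := by
  classical
  set R := t * Real.sqrt (∑ ℓ : Fin s, ((∑ i ∈ B ℓ, x i) / Real.sqrt (B ℓ).card) ^ 2) with hRdef
  have hR : 0 ≤ R := mul_nonneg ht (Real.sqrt_nonneg _)
  refine Real.iSup_le (fun θ => Real.iSup_le (fun hθ => ?_) hR) hR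
  obtain ⟨hΘ, hn⟩ := hθ
  set Zv : EuclideanSpace ℝ (Fin s) :=
    WithLp.toLp 2 (fun ℓ => (∑ i ∈ B ℓ, x i) / Real.sqrt (B ℓ).card) with hZv
  set w : EuclideanSpace ℝ (Fin s) :=
    WithLp.toLp 2 (fun ℓ => (if h : (B ℓ).Nonempty then θ h.choose else 0) * Real.sqrt (B ℓ).card) with hw
  have hinner : ⟪x, θ⟫ = ⟪w, Zv⟫ := by
    rw [PiLp.inner_apply, PiLp.inner_apply]
    simp only [RCLike.inner_apply, conj_trivial]
    rw [Finset.sum_congr rfl (fun i _ => mul_comm (θ i) (x i)),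
      Finset.sum_congr rfl (fun ℓ _ => mul_comm (Zv ℓ) (w ℓ))]
    rw [sum_sq_blocks B hdisj hcover (fun i => x i * θ i)]
    refine Finset.sum_congr rfl fun ℓ _ => ?_
    rcases Finset.eq_empty_or_nonempty (B ℓ) with he | hne
    · simp [hw, hZv, he]
    · have hcard : (0:ℝ) < Real.sqrt (B ℓ).card := by
        rw [Real.sqrt_pos]; exact_mod_cast hne.card_pos
      have hval : ∀ i ∈ B ℓ, θ i = θ hne.choose :=
        fun i hi => hconst θ hΘ ℓ i hi hne.choose hne.choose_spec
      calc ∑ i ∈ B ℓ, x i * θ i = ∑ i ∈ B ℓ, x i * θ hne.choose :=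
            Finset.sum_congr rfl fun i hi => by rw [hval i hi]
        _ = (∑ i ∈ B ℓ, x i) * θ hne.choose := by rw [Finset.sum_mul]
        _ = w ℓ * Zv ℓ := by
            simp only [hw, hZv, PiLp.toLp_apply, dif_pos hne]
            field_simp
  have hnormw : ‖w‖ = ‖θ‖ := by
    rw [EuclideanSpace.norm_eq, EuclideanSpace.norm_eq]
    congr 1
    rw [sum_sq_blocks B hdisj hcover (fun i => ‖θ i‖ ^ 2)]
    refine Finset.sum_congr rfl fun ℓ _ => ?_
    rcases Finset.eq_empty_or_nonempty (B ℓ) with he | hne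
    · simp [hw, he]
    · have hval : ∀ i ∈ B ℓ, θ i = θ hne.choose :=
        fun i hi => hconst θ hΘ ℓ i hi hne.choose hne.choose_spec
      have : ∑ i ∈ B ℓ, ‖θ i‖ ^ 2 = (B ℓ).card * θ hne.choose ^ 2 := by
        rw [Finset.sum_congr rfl (fun i hi => by
          rw [hval i hi, Real.norm_eq_abs, sq_abs])]
        rw [Finset.sum_const, nsmul_eq_mul]
      rw [this, Real.norm_eq_abs, sq_abs, hw]
      simp only [dif_pos hne]
      rw [mul_pow, Real.sq_sqrt (by positivity)]
      ring
  calc ⟪x, θ⟫ = ⟪w, Zv⟫ := hinner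
    _ ≤ ‖w‖ * ‖Zv‖ := real_inner_le_norm w Zv
    _ ≤ t * ‖Zv‖ := by
        refine mul_le_mul_of_nonneg_right ?_ (norm_nonneg _)
        rw [hnormw]; exact hn
    _ = R := by
        rw [hRdef, EuclideanSpace.norm_eq]
        congr 2
        refine Finset.sum_congr rfl fun ℓ _ => ?_
        rw [Real.norm_eq_abs, sq_abs]


end GaussAux


open GaussAux

theorem gaussian_sup_block_constant_dominated
    {I : Type*} [Fintype I] {s : ℕ} (B : Fin s → Finset I)
    (hdisj : ∀ ℓ ℓ' : Fin s, ℓ ≠ ℓ' → Disjoint (B ℓ) (B ℓ'))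
    (hcover : ∀ i : I, ∃ ℓ, i ∈ B ℓ)
    (Θ : Set (EuclideanSpace ℝ I))
    (hconst : ∀ θ ∈ Θ, ∀ ℓ : Fin s, ∀ i ∈ B ℓ, ∀ j ∈ B ℓ, θ i = θ j)
    {Ω : Type*} [MeasurableSpace Ω] (μ : Measure Ω) [IsProbabilityMeasure μ]
    (ε : Ω → EuclideanSpace ℝ I)
    (hmeas : ∀ i, Measurable fun ω => ε ω i)
    (hindep : iIndepFun
      (fun i ω => ε ω i) μ)
    (hgauss : ∀ i, μ.map (fun ω => ε ω i) = gaussianReal 0 1)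
    {Ω' : Type*} [MeasurableSpace Ω'] (ν : Measure Ω') [IsProbabilityMeasure ν]
    (η : Ω' → EuclideanSpace ℝ (Fin s))
    (hmeas' : ∀ j, Measurable fun ω' => η ω' j)
    (hindep' : iIndepFun
      (fun j ω' => η ω' j) ν)
    (hgauss' : ∀ j, ν.map (fun ω' => η ω' j) = gaussianReal 0 1)
    (t : ℝ) (ht : 0 ≤ t) :
    ∀ u : ℝ,
      μ {ω | u ≤ ⨆ θ ∈ {θ ∈ Θ | ‖θ‖ ≤ t}, ⟪ε ω, θ⟫} ≤
        ν {ω' | u ≤ t * ‖η ω'‖} := by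
  classical
  intro u
  set p : Fin s → Prop := fun ℓ => (B ℓ).Nonempty with hp
  set Z : Fin s → Ω → ℝ := fun ℓ ω => (∑ i ∈ B ℓ, ε ω i) / Real.sqrt (B ℓ).card with hZ
  have hZmeas : ∀ ℓ, Measurable (Z ℓ) := fun ℓ =>
    (Finset.measurable_sum _ (fun i _ => hmeas i)).div_const _
  have hZlaw : ∀ ℓ, p ℓ → μ.map (Z ℓ) = gaussianReal 0 1 := fun ℓ hℓ =>
    map_normalized_sum_gaussian hmeas hindep hgauss (B ℓ) hℓ
  -- joint law of the nonempty-block normalized sums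
  have hFlaw : μ.map (fun ω (ℓ : {ℓ // p ℓ}) => Z ℓ.1 ω)
      = Measure.pi (fun _ : {ℓ // p ℓ} => gaussianReal 0 1) := by
    refine joint_law (fun ℓ => hZmeas ℓ.1) (fun A hA => ?_) (fun ℓ => hZlaw ℓ.1 ℓ.2)
    have hE : ∀ ℓ : {ℓ // p ℓ}, MeasurableSet[⨆ i ∈ ((B ℓ.1 : Finset I) : Set I),
        MeasurableSpace.comap (fun ω => ε ω i) (inferInstance : MeasurableSpace ℝ)]
        (Z ℓ.1 ⁻¹' A ℓ) := by
      intro ℓ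
      have hm : ∀ i ∈ B ℓ.1, Measurable[⨆ i ∈ ((B ℓ.1 : Finset I) : Set I),
          MeasurableSpace.comap (fun ω => ε ω i) (inferInstance : MeasurableSpace ℝ)]
          (fun ω => ε ω i) := by
        intro i hi
        have h1 : Measurable[MeasurableSpace.comap (fun ω => ε ω i)
            (inferInstance : MeasurableSpace ℝ)] (fun ω => ε ω i) :=
          measurable_iff_comap_le.2 le_rfl
        refine h1.mono ?_ le_rfl
        exact le_iSup₂ (f := fun i (_ : i ∈ ((B ℓ.1 : Finset I) : Set I)) =>
          MeasurableSpace.comap (fun ω => ε ω i) (inferInstance : MeasurableSpace ℝ)) i hi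
      have hZm : Measurable[⨆ i ∈ ((B ℓ.1 : Finset I) : Set I),
          MeasurableSpace.comap (fun ω => ε ω i) (inferInstance : MeasurableSpace ℝ)]
          (Z ℓ.1) := (Finset.measurable_sum _ hm).div_const _
      exact hZm (hA ℓ)
    have h := meas_biInter_blocks (f := fun i ω => ε ω i) hmeas hindep
      (fun ℓ : {ℓ // p ℓ} => B ℓ.1)
      (fun ℓ ℓ' hne => hdisj ℓ.1 ℓ'.1 (fun h => hne (Subtype.ext h)))
      (fun ℓ : {ℓ // p ℓ} => Z ℓ.1 ⁻¹' A ℓ) hE Finset.univ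
    simpa using h
  -- joint law of η restricted to nonempty blocks
  have hGprod : ∀ A : {ℓ // p ℓ} → Set ℝ, (∀ ℓ, MeasurableSet (A ℓ)) →
      ν (⋂ ℓ : {ℓ // p ℓ}, (fun ω' => η ω' ℓ.1) ⁻¹' A ℓ)
        = ∏ ℓ : {ℓ // p ℓ}, ν ((fun ω' => η ω' ℓ.1) ⁻¹' A ℓ) := by
    intro A hA
    set E : Fin s → Set Ω' := fun j =>
      if h : p j then (fun ω' => η ω' j) ⁻¹' A ⟨j, h⟩ else Set.univ with hEdef
    have h1 : (⋂ ℓ : {ℓ // p ℓ}, (fun ω' => η ω' ℓ.1) ⁻¹' A ℓ) = ⋂ j, E j := by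
      ext ω'
      simp only [Set.mem_iInter, hEdef]
      constructor
      · intro h j
        by_cases hj : p j
        · rw [dif_pos hj]; exact h ⟨j, hj⟩
        · rw [dif_neg hj]; trivial
      · intro h ℓ
        have := h ℓ.1
        rwa [dif_pos ℓ.2] at this
    have h2 : ∀ j, MeasurableSet[MeasurableSpace.comap (fun ω' => η ω' j)
        (inferInstance : MeasurableSpace ℝ)] (E j) := by
      intro j
      rw [MeasurableSpace.measurableSet_comap]
      by_cases hj : p j
      · exact ⟨A ⟨j, hj⟩, hA _, by rw [hEdef]; simp [dif_pos hj]⟩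
      · exact ⟨Set.univ, MeasurableSet.univ, by rw [hEdef]; simp [dif_neg hj]⟩
    rw [h1, hindep'.meas_iInter h2]
    have h3 : ∀ j, ν (E j) = if h : p j then ν ((fun ω' => η ω' j) ⁻¹' A ⟨j, h⟩) else 1 := by
      intro j
      by_cases hj : p j <;> simp [hEdef, hj]
    calc ∏ j, ν (E j) = ∏ j, if h : p j then ν ((fun ω' => η ω' j) ⁻¹' A ⟨j, h⟩) else 1 :=
          Finset.prod_congr rfl fun j _ => h3 j
      _ = _ := by rw [Fintype.prod_dite]; simp
  have hGlaw : ν.map (fun ω' (ℓ : {ℓ // p ℓ}) => η ω' ℓ.1)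
      = Measure.pi (fun _ : {ℓ // p ℓ} => gaussianReal 0 1) :=
    joint_law (fun ℓ => hmeas' ℓ.1) hGprod (fun ℓ => hgauss' ℓ.1)
  -- the common target set
  set Sset : Set ({ℓ // p ℓ} → ℝ) := {y | u ≤ t * Real.sqrt (∑ ℓ, (y ℓ) ^ 2)} with hSset
  have hSmeas : MeasurableSet Sset := by
    have hmS : Measurable fun y : {ℓ // p ℓ} → ℝ => t * Real.sqrt (∑ ℓ, (y ℓ) ^ 2) := by
      apply Measurable.const_mul
      exact (Finset.measurable_sum _ (fun ℓ _ => (measurable_pi_apply ℓ).pow_const 2)).sqrt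
    exact measurableSet_le measurable_const hmS
  -- sum over all blocks equals sum over nonempty ones
  have hsum_eq : ∀ ω, ∑ ℓ : Fin s, (Z ℓ ω) ^ 2 = ∑ ℓ : {ℓ // p ℓ}, (Z ℓ.1 ω) ^ 2 := by
    intro ω
    rw [← Finset.sum_filter_of_ne (p := p) (fun ℓ _ hne => ?_),
      Finset.sum_subtype (p := p) (Finset.univ.filter p) (fun ℓ => by simp) (fun ℓ => (Z ℓ ω) ^ 2)]
    by_contra hpℓ
    apply hne
    have hBe : B ℓ = ∅ := Finset.not_nonempty_iff_eq_empty.1 hpℓ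
    simp [hZ, hBe]
  calc μ {ω | u ≤ ⨆ θ ∈ {θ ∈ Θ | ‖θ‖ ≤ t}, ⟪ε ω, θ⟫}
      ≤ μ {ω | u ≤ t * Real.sqrt (∑ ℓ : {ℓ // p ℓ}, (Z ℓ.1 ω) ^ 2)} := by
        refine measure_mono (fun ω hω => ?_)
        simp only [Set.mem_setOf_eq] at hω ⊢
        refine le_trans hω ?_
        have := sup_bound B hdisj hcover Θ hconst t ht (ε ω)
        rw [← hsum_eq ω]
        exact this
    _ = μ.map (fun ω (ℓ : {ℓ // p ℓ}) => Z ℓ.1 ω) Sset := by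
        rw [Measure.map_apply (measurable_pi_lambda _ (fun ℓ => hZmeas ℓ.1)) hSmeas]
        rfl
    _ = Measure.pi (fun _ : {ℓ // p ℓ} => gaussianReal 0 1) Sset := by rw [hFlaw]
    _ = ν.map (fun ω' (ℓ : {ℓ // p ℓ}) => η ω' ℓ.1) Sset := by rw [hGlaw]
    _ = ν {ω' | u ≤ t * Real.sqrt (∑ ℓ : {ℓ // p ℓ}, (η ω' ℓ.1) ^ 2)} := by
        rw [Measure.map_apply (measurable_pi_lambda _ (fun ℓ => hmeas' ℓ.1)) hSmeas]
        rfl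
    _ ≤ ν {ω' | u ≤ t * ‖η ω'‖} := by
        refine measure_mono (fun ω' hω' => ?_)
        simp only [Set.mem_setOf_eq] at hω' ⊢
        refine le_trans hω' ?_
        refine mul_le_mul_of_nonneg_left ?_ ht
        rw [EuclideanSpace.norm_eq]
        refine Real.sqrt_le_sqrt ?_
        calc ∑ ℓ : {ℓ // p ℓ}, (η ω' ℓ.1) ^ 2
            = ∑ j ∈ Finset.univ.filter p, (η ω' j) ^ 2 :=
              (Finset.sum_subtype (p := p) (Finset.univ.filter p) (fun ℓ => by simp)
                (fun j => (η ω' j) ^ 2)).symm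
          _ ≤ ∑ j, (η ω' j) ^ 2 :=
              Finset.sum_le_sum_of_subset_of_nonneg (Finset.filter_subset _ _)
                (fun j _ _ => sq_nonneg _)
          _ = ∑ j, ‖η ω' j‖ ^ 2 := by
              refine Finset.sum_congr rfl fun j _ => ?_
              rw [Real.norm_eq_abs, sq_abs]
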